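/- Let k : ℝⁿ × ℝⁿ → ℝ be a continuously differentiable kernel. For a finite family of points y₁, …, y_M ∈ ℝⁿ, let V_{y₁,…,y_M}(x) = (1/M) Σₘ k(x, yₘ)(yₘ − x) and let C_{y₁,…,y_M}(x) denote the antisymmetric part of its Jacobian, i.e., the matrix with entries ∂ᵢV_j(x) − ∂ⱼV_i(x). Suppose there exists a single matrix-valued function C : ℝⁿ → ℝ^{n×n} such that C_{y₁,…,y_M} = C for every finite family y₁, …, y_M (i.e., the curl is invariant to the choice of points). Then C(x) = 0 for all x ∈ ℝⁿ, and hence C_{y₁,…,y_M} ≡ 0 for every finite family. -/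

import Mathlib

noncomputable section

/-- For a C¹ kernel `k`, if the curl (antisymmetric part of the
Jacobian) of the unnormalized drift sub-field
`V(x) = (1/M) Σₘ k(x,yₘ)(yₘ − x)` is the same matrix-valued function `C` for every
finite family of points, then `C ≡ 0`, and hence the curl vanishes for every family. -/
theorem invariant_curl_of_drift_subfield_is_zero {n : ℕ}
    (k : EuclideanSpace ℝ (Fin n) → EuclideanSpace ℝ (Fin n) → ℝ)
    (hk : ContDiff ℝ 1 (fun p : EuclideanSpace ℝ (Fin n) × EuclideanSpace ℝ (Fin n) =>
      k p.1 p.2))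
    (C : EuclideanSpace ℝ (Fin n) → Matrix (Fin n) (Fin n) ℝ)
    (hC : ∀ (M : ℕ), 0 < M → ∀ (y : Fin M → EuclideanSpace ℝ (Fin n))
      (x : EuclideanSpace ℝ (Fin n)) (i j : Fin n),
      fderiv ℝ (fun x' => (1 / (M : ℝ)) • ∑ m, k x' (y m) • (y m - x')) x
          (EuclideanSpace.single i 1) j -
        fderiv ℝ (fun x' => (1 / (M : ℝ)) • ∑ m, k x' (y m) • (y m - x')) x
          (EuclideanSpace.single j 1) i = C x i j) :
    (∀ x i j, C x i j = 0) ∧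
    ∀ (M : ℕ), 0 < M → ∀ (y : Fin M → EuclideanSpace ℝ (Fin n))
      (x : EuclideanSpace ℝ (Fin n)) (i j : Fin n),
      fderiv ℝ (fun x' => (1 / (M : ℝ)) • ∑ m, k x' (y m) • (y m - x')) x
          (EuclideanSpace.single i 1) j -
        fderiv ℝ (fun x' => (1 / (M : ℝ)) • ∑ m, k x' (y m) • (y m - x')) x
          (EuclideanSpace.single j 1) i = 0 := by
  have key : ∀ x i j, C x i j = 0 := by
    intro x i j
    have h := hC 1 one_pos (fun _ => x) x i j
    rw [← h]
    have hfun : (fun x' : EuclideanSpace ℝ (Fin n) =>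
        (1 / ((1:ℕ) : ℝ)) • ∑ m : Fin 1, k x' ((fun _ => x) m) • ((fun _ => x) m - x'))
        = fun x' => k x' x • (x - x') := by
      funext x'
      simp
    rw [hfun]
    -- derivative of x' ↦ k x' x
    have hdk : DifferentiableAt ℝ (fun x' : EuclideanSpace ℝ (Fin n) => k x' x) x := by
      have := (hk.differentiable one_ne_zero)
      exact (this.comp (differentiable_id.prodMk (differentiable_const x))).differentiableAt
    have hsub : HasFDerivAt (fun x' : EuclideanSpace ℝ (Fin n) => x - x')
        (0 - ContinuousLinearMap.id ℝ (EuclideanSpace ℝ (Fin n))) x :=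
      (hasFDerivAt_const x x).sub (hasFDerivAt_id x)
    have hmul := hdk.hasFDerivAt.smul hsub
    rw [show (fun x' : EuclideanSpace ℝ (Fin n) => k x' x • (x - x')) = ((fun x' => k x' x) • fun x' => x - x') from rfl, hmul.fderiv]
    simp [EuclideanSpace.single_apply, mul_comm, eq_comm]
  refine ⟨key, ?_⟩
  intro M hM y x i j
  rw [hC M hM y x i j, key]
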